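/- For every graph G, generalized threshold function τ, and positive integer k: t_τ(G) ≥ k if and only if there exists a vertex v ∈ V(G) such that in the induced subgraph G_k^v = G[N_k[v]] with restricted threshold function τ_k^v, there is a target set containing all vertices at distance exactly k from v whose activation time is at least k. -/
import Mathlib


namespace TSS

variable {V : Type*}

/-- The interval (one activation step): `S` together with all vertices having
at least `τ v` neighbors in `S`. -/
def interval (G : SimpleGraph V) (τ : V → ℕ) (S : Set V) : Set V :=
  S ∪ {v | τ v ≤ (G.neighborSet v ∩ S).ncard}

/-- `S` is a target set if iterating the interval operator reaches all of `V`. -/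
def IsTargetSet (G : SimpleGraph V) (τ : V → ℕ) (S : Set V) : Prop :=
  ∃ t : ℕ, (interval G τ)^[t] S = Set.univ

/-- The activation time of a set: least `t` with `I^[t+1] S = I^[t] S`. -/
noncomputable def actTime (G : SimpleGraph V) (τ : V → ℕ) (S : Set V) : ℕ :=
  sInf {t : ℕ | (interval G τ)^[t + 1] S = (interval G τ)^[t] S}

/-- The maximum activation time over all target sets. -/
noncomputable def maxTime (G : SimpleGraph V) (τ : V → ℕ) : ℕ :=
  sSup {t : ℕ | ∃ S : Set V, IsTargetSet G τ S ∧ actTime G τ S = t}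

/-- The activation time of a vertex `v` for an initial set `S`. -/
noncomputable def vTime (G : SimpleGraph V) (τ : V → ℕ) (S : Set V) (v : V) : ℕ :=
  sInf {k : ℕ | v ∈ (interval G τ)^[k] S}

/-- The set of vertices eventually activated from `S`. -/
def hull (G : SimpleGraph V) (τ : V → ℕ) (S : Set V) : Set V :=
  {v | ∃ k : ℕ, v ∈ (interval G τ)^[k] S}

end TSS

open TSS


section Aux

variable {V : Type*} (G : SimpleGraph V) (τ : V → ℕ) (S : Set V)

lemma mem_interval {u : V} :
    u ∈ interval G τ S ↔ u ∈ S ∨ τ u ≤ (G.neighborSet u ∩ S).ncard := Iff.rfl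

lemma subset_interval : S ⊆ interval G τ S := Set.subset_union_left

lemma iter_mono {a b : ℕ} (h : a ≤ b) :
    (interval G τ)^[a] S ⊆ (interval G τ)^[b] S := by
  induction b, h using Nat.le_induction with
  | base => exact subset_refl _
  | succ b hb ih =>
    rw [Function.iterate_succ_apply']
    exact ih.trans (subset_interval _ _ _)

lemma interval_univ : interval G τ Set.univ = Set.univ :=
  Set.eq_univ_of_univ_subset (subset_interval _ _ _)

lemma stab {a : ℕ} (h : (interval G τ)^[a + 1] S = (interval G τ)^[a] S)
    {b : ℕ} (hb : a ≤ b) : (interval G τ)^[b] S = (interval G τ)^[a] S := by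
  induction b, hb using Nat.le_induction with
  | base => rfl
  | succ b hb ih =>
    have h' := h
    rw [Function.iterate_succ_apply'] at h'
    rw [Function.iterate_succ_apply', ih, h']

lemma act_univ (hT : IsTargetSet G τ S) {s : ℕ} (hs : actTime G τ S ≤ s) :
    (interval G τ)^[s] S = Set.univ := by
  obtain ⟨m, hm⟩ := hT
  have hmem : (interval G τ)^[m + 1] S = (interval G τ)^[m] S := by
    rw [hm, Function.iterate_succ_apply', hm, interval_univ]
  have hne : {t : ℕ | (interval G τ)^[t + 1] S = (interval G τ)^[t] S}.Nonempty := ⟨m, hmem⟩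
  have hact : (interval G τ)^[actTime G τ S + 1] S = (interval G τ)^[actTime G τ S] S :=
    Nat.sInf_mem hne
  have hau : (interval G τ)^[actTime G τ S] S = Set.univ := by
    rcases le_total m (actTime G τ S) with h | h
    · exact Set.eq_univ_of_univ_subset (hm ▸ iter_mono G τ S h)
    · rw [← stab G τ S hact h, hm]
  rw [stab G τ S hact hs, hau]

lemma actTime_le_card [Fintype V] : actTime G τ S ≤ Fintype.card V := by
  by_contra hcon
  push_neg at hcon
  have hne : ∀ t ≤ Fintype.card V,
      (interval G τ)^[t + 1] S ≠ (interval G τ)^[t] S := by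
    intro t ht heq
    have h3 : actTime G τ S ≤ t := Nat.sInf_le heq
    omega
  have key : ∀ s, s ≤ Fintype.card V + 1 → s ≤ ((interval G τ)^[s] S).ncard := by
    intro s
    induction s with
    | zero => intro _; exact Nat.zero_le _
    | succ s ih =>
      intro hs
      have hss : (interval G τ)^[s] S ⊂ (interval G τ)^[s + 1] S :=
        ⟨iter_mono G τ S (Nat.le_succ s), fun h =>
          hne s (by omega) (Set.Subset.antisymm h (iter_mono G τ S (Nat.le_succ s)))⟩
      have := Set.ncard_lt_ncard hss (Set.toFinite _)
      have := ih (by omega)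
      omega
  have h1 := key (Fintype.card V + 1) le_rfl
  have h2 : ((interval G τ)^[Fintype.card V + 1] S).ncard ≤ Fintype.card V := by
    have := Set.ncard_le_ncard (Set.subset_univ ((interval G τ)^[Fintype.card V + 1] S))
      (Set.toFinite _)
    rwa [Set.ncard_univ, Nat.card_eq_fintype_card] at this
  omega

lemma maxTime_bdd [Fintype V] :
    BddAbove {t : ℕ | ∃ S : Set V, IsTargetSet G τ S ∧ actTime G τ S = t} := by
  refine ⟨Fintype.card V, fun t ht => ?_⟩
  obtain ⟨S, _, rfl⟩ := ht
  exact actTime_le_card G τ S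

end Aux

section Aux2
variable {V : Type*} (G : SimpleGraph V)
lemma image_nbhd (U : Set V) (u : ↥U) (T : Set ↥U) :
    Subtype.val '' ((G.induce U).neighborSet u ∩ T) =
      G.neighborSet u.1 ∩ (Subtype.val '' T) := by
  ext w
  constructor
  · rintro ⟨⟨w', hw'⟩, ⟨hadj, hT⟩, rfl⟩
    exact ⟨hadj, ⟨_, hT, rfl⟩⟩
  · rintro ⟨hadj, ⟨⟨w', hw'⟩, hT, rfl⟩⟩
    exact ⟨⟨w', hw'⟩, ⟨hadj, hT⟩, rfl⟩
lemma ncard_nbhd (U : Set V) (u : ↥U) (T : Set ↥U) :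
    ((G.induce U).neighborSet u ∩ T).ncard =
      (G.neighborSet u.1 ∩ (Subtype.val '' T)).ncard := by
  rw [← image_nbhd, Set.ncard_image_of_injective _ Subtype.val_injective]
lemma dist_adj (v : V) {u w : V} (h : G.Adj u w) :
    G.dist v w ≤ G.dist v u + 1 ∨ G.dist v w = 0 := by
  by_cases hr : G.Reachable v u
  · left
    obtain ⟨p, hp⟩ := hr.exists_walk_length_eq_dist
    have := G.dist_le (p.append h.toWalk)
    rwa [SimpleGraph.Walk.length_append, hp] at this
  · right
    refine SimpleGraph.dist_eq_zero_of_not_reachable fun hrw => hr ?_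
    exact hrw.trans h.symm.reachable
end Aux2


section Main
variable {V : Type*} [Fintype V] (G : SimpleGraph V) (τ : V → ℕ) (k : ℕ) (v : V)

omit [Fintype V] in
lemma nbr_mem {x w : V} (hx : G.dist v x < k) (hadj : G.Adj x w) :
    w ∈ {u : V | G.dist v u ≤ k} := by
  have := dist_adj G (v := v) hadj
  simp only [Set.mem_setOf_eq]
  omega

lemma step_in (T : Set ↥{u : V | G.dist v u ≤ k})
    (hbd : ∀ u : ↥{u : V | G.dist v u ≤ k}, G.dist v u.1 = k → u ∈ T) :
    interval G τ (Subtype.val '' T ∪ {u : V | G.dist v u ≤ k}ᶜ) =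
      Subtype.val '' (interval (G.induce {u : V | G.dist v u ≤ k}) (fun u => τ u.1) T) ∪
        {u : V | G.dist v u ≤ k}ᶜ := by
  apply Set.Subset.antisymm
  · intro x hx
    by_cases hxU : x ∈ {u : V | G.dist v u ≤ k}
    · rcases hx with (hx | hx) | hx
      · obtain ⟨u', hu', rfl⟩ := hx
        exact Or.inl ⟨u', subset_interval _ _ _ hu', rfl⟩
      · exact absurd hxU hx
      · by_cases hxk : G.dist v x = k
        · exact Or.inl ⟨⟨x, hxU⟩, subset_interval _ _ _ (hbd ⟨x, hxU⟩ hxk), rfl⟩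
        · have hxlt : G.dist v x < k := lt_of_le_of_ne hxU hxk
          have hnb : G.neighborSet x ∩ (Subtype.val '' T ∪ {u : V | G.dist v u ≤ k}ᶜ) ⊆
              G.neighborSet x ∩ Subtype.val '' T := by
            rintro w ⟨hadj, hw | hw⟩
            · exact ⟨hadj, hw⟩
            · exact absurd (nbr_mem G k v hxlt hadj) hw
          have hle : τ x ≤ (G.neighborSet x ∩ Subtype.val '' T).ncard :=
            le_trans hx (Set.ncard_le_ncard hnb (Set.toFinite _))
          have hle2 : τ x ≤
              ((G.induce {u : V | G.dist v u ≤ k}).neighborSet ⟨x, hxU⟩ ∩ T).ncard :=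
            le_trans hle (le_of_eq (ncard_nbhd G _ ⟨x, hxU⟩ T).symm)
          exact Or.inl ⟨⟨x, hxU⟩, Or.inr hle2, rfl⟩
    · exact Or.inr hxU
  · rintro x (hx | hx)
    · obtain ⟨u, hu, rfl⟩ := hx
      rcases hu with hu | hu
      · exact subset_interval _ _ _ (Or.inl ⟨u, hu, rfl⟩)
      · refine Or.inr ?_
        have hle : τ u.1 ≤ (G.neighborSet u.1 ∩ Subtype.val '' T).ncard :=
          le_trans hu (le_of_eq (ncard_nbhd G _ u T))
        exact le_trans hle (Set.ncard_le_ncard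
          (Set.inter_subset_inter_right _ Set.subset_union_left) (Set.toFinite _))
    · exact subset_interval _ _ _ (Or.inr hx)

lemma sim_in (S : Set ↥{u : V | G.dist v u ≤ k})
    (hbd : ∀ u : ↥{u : V | G.dist v u ≤ k}, G.dist v u.1 = k → u ∈ S) (s : ℕ) :
    (interval G τ)^[s] (Subtype.val '' S ∪ {u : V | G.dist v u ≤ k}ᶜ) =
      Subtype.val ''
          ((interval (G.induce {u : V | G.dist v u ≤ k}) (fun u => τ u.1))^[s] S) ∪
        {u : V | G.dist v u ≤ k}ᶜ := by
  induction s with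
  | zero => rfl
  | succ s ih =>
    rw [Function.iterate_succ_apply', Function.iterate_succ_apply', ih]
    exact step_in G τ k v _ (fun u hu => iter_mono _ _ _ (Nat.zero_le s) (hbd u hu))

lemma step_out1 (A : Set V) (T : Set ↥{u : V | G.dist v u ≤ k}) (s : ℕ)
    (hT : Subtype.val '' T ⊆ A ∪ {x : V | k ≤ G.dist v x + s}) :
    Subtype.val '' (interval (G.induce {u : V | G.dist v u ≤ k}) (fun u => τ u.1) T) ⊆
      interval G τ A ∪ {x : V | k ≤ G.dist v x + (s + 1)} := by
  rintro x ⟨u, hu, rfl⟩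
  rcases hu with hu | hu
  · rcases hT ⟨u, hu, rfl⟩ with h | h
    · exact Or.inl (subset_interval _ _ _ h)
    · refine Or.inr ?_
      simp only [Set.mem_setOf_eq] at h ⊢
      omega
  · by_cases hfar : k ≤ G.dist v u.1 + (s + 1)
    · exact Or.inr hfar
    · push_neg at hfar
      refine Or.inl (Or.inr ?_)
      have hle : τ u.1 ≤ (G.neighborSet u.1 ∩ Subtype.val '' T).ncard :=
        le_trans hu (le_of_eq (ncard_nbhd G _ u T))
      refine le_trans hle (Set.ncard_le_ncard ?_ (Set.toFinite _))
      rintro w ⟨hadj, hw⟩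
      refine ⟨hadj, ?_⟩
      rcases hT hw with h | h
      · exact h
      · exfalso
        simp only [Set.mem_setOf_eq] at h
        rcases dist_adj G (v := v) hadj with h2 | h2 <;> omega

lemma sim_out1 (S : Set V) (s : ℕ) :
    Subtype.val '' ((interval (G.induce {u : V | G.dist v u ≤ k}) (fun u => τ u.1))^[s]
        {u : ↥{u : V | G.dist v u ≤ k} | u.1 ∈ S ∨ G.dist v u.1 = k}) ⊆
      (interval G τ)^[s] S ∪ {x : V | k ≤ G.dist v x + s} := by
  induction s with
  | zero =>
    rintro x ⟨u, hu, rfl⟩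
    rcases hu with hu | hu
    · exact Or.inl hu
    · exact Or.inr (by simp [hu])
  | succ s ih =>
    rw [Function.iterate_succ_apply', Function.iterate_succ_apply']
    exact step_out1 G τ k v _ _ s ih

lemma step_out2 (A : Set V) (T : Set ↥{u : V | G.dist v u ≤ k})
    (hbd : ∀ u : ↥{u : V | G.dist v u ≤ k}, G.dist v u.1 = k → u ∈ T)
    (hT : Subtype.val ⁻¹' A ⊆ T) :
    Subtype.val ⁻¹' (interval G τ A) ⊆
      interval (G.induce {u : V | G.dist v u ≤ k}) (fun u => τ u.1) T := by
  intro u hu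
  rcases hu with hu | hu
  · exact Or.inl (hT hu)
  · by_cases hxk : G.dist v u.1 = k
    · exact Or.inl (hbd u hxk)
    · have hxlt : G.dist v u.1 < k := lt_of_le_of_ne u.2 hxk
      refine Or.inr ?_
      have hsub : G.neighborSet u.1 ∩ A ⊆
          G.neighborSet u.1 ∩ Subtype.val '' T := by
        rintro w ⟨hadj, hw⟩
        have hwU := nbr_mem G k v hxlt hadj
        exact ⟨hadj, ⟨⟨w, hwU⟩, hT hw, rfl⟩⟩
      have hle : τ u.1 ≤ (G.neighborSet u.1 ∩ Subtype.val '' T).ncard :=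
        le_trans hu (Set.ncard_le_ncard hsub (Set.toFinite _))
      exact le_trans hle (le_of_eq (ncard_nbhd G _ u T).symm)

lemma sim_out2 (S : Set V) (s : ℕ) :
    Subtype.val ⁻¹' ((interval G τ)^[s] S) ⊆
      (interval (G.induce {u : V | G.dist v u ≤ k}) (fun u => τ u.1))^[s]
        {u : ↥{u : V | G.dist v u ≤ k} | u.1 ∈ S ∨ G.dist v u.1 = k} := by
  induction s with
  | zero => exact fun u hu => Or.inl hu
  | succ s ih =>
    rw [Function.iterate_succ_apply', Function.iterate_succ_apply']
    refine step_out2 G τ k v _ _ ?_ ih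
    exact fun u hu => iter_mono _ _ _ (Nat.zero_le s) (Or.inr hu)

end Main

open TSS


/-- t_τ(G) ≥ k iff there is a vertex v such that in the subgraph
induced on N_k[v] with the restricted thresholds, some target set containing all
vertices at distance exactly k from v has activation time ≥ k. -/
theorem stmt3 {V : Type*} [Fintype V] (G : SimpleGraph V) (τ : V → ℕ)
    (k : ℕ) (hk : 0 < k) :
    k ≤ TSS.maxTime G τ ↔
      ∃ v : V, ∃ S : Set ↥{u : V | G.dist v u ≤ k},
        (∀ u : ↥{u : V | G.dist v u ≤ k}, G.dist v u.1 = k → u ∈ S) ∧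
        TSS.IsTargetSet (G.induce {u : V | G.dist v u ≤ k}) (fun u => τ u.1) S ∧
        k ≤ TSS.actTime (G.induce {u : V | G.dist v u ≤ k}) (fun u => τ u.1) S := by
  classical
  constructor
  · intro hk_le
    have hne : {t : ℕ | ∃ S : Set V, IsTargetSet G τ S ∧ actTime G τ S = t}.Nonempty :=
      ⟨actTime G τ Set.univ, Set.univ, ⟨0, rfl⟩, rfl⟩
    obtain ⟨S, hTS, hact⟩ := Nat.sSup_mem hne (maxTime_bdd G τ)
    have hkt : k ≤ actTime G τ S := by rw [hact]; exact hk_le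
    have hne2 : (interval G τ)^[actTime G τ S] S ≠
        (interval G τ)^[actTime G τ S - 1] S := by
      have h1 : actTime G τ S - 1 < actTime G τ S := by omega
      have h2 := Nat.notMem_of_lt_sInf
        (s := {t : ℕ | (interval G τ)^[t + 1] S = (interval G τ)^[t] S}) h1
      intro hcon
      apply h2
      have h3 : actTime G τ S - 1 + 1 = actTime G τ S := by omega
      show (interval G τ)^[actTime G τ S - 1 + 1] S = (interval G τ)^[actTime G τ S - 1] S
      rw [h3]
      exact hcon
    have hsub := iter_mono G τ S (show actTime G τ S - 1 ≤ actTime G τ S by omega)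
    have hnsub : ¬ ((interval G τ)^[actTime G τ S] S ⊆
        (interval G τ)^[actTime G τ S - 1] S) :=
      fun h => hne2 (Set.Subset.antisymm h hsub)
    obtain ⟨v, hvmem, hvnot⟩ := Set.not_subset.mp hnsub
    have hTi : IsTargetSet (G.induce {u : V | G.dist v u ≤ k}) (fun u => τ u.1)
        {u : ↥{u : V | G.dist v u ≤ k} | u.1 ∈ S ∨ G.dist v u.1 = k} := by
      obtain ⟨m, hm⟩ := hTS
      refine ⟨m, Set.eq_univ_of_forall fun u => ?_⟩
      exact sim_out2 G τ k v S m (by rw [Set.mem_preimage, hm]; exact Set.mem_univ _)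
    refine ⟨v, {u : ↥{u : V | G.dist v u ≤ k} | u.1 ∈ S ∨ G.dist v u.1 = k},
      fun u hu => Or.inr hu, hTi, ?_⟩
    by_contra hcon
    push_neg at hcon
    have hu1 := act_univ _ _ _ hTi
      (show actTime (G.induce {u : V | G.dist v u ≤ k}) (fun u => τ u.1)
        {u : ↥{u : V | G.dist v u ≤ k} | u.1 ∈ S ∨ G.dist v u.1 = k} ≤ k - 1 by omega)
    have hvU : v ∈ {u : V | G.dist v u ≤ k} := by
      simp [SimpleGraph.dist_self]
    have hv1 : v ∈ (interval G τ)^[k-1] S ∪ {x : V | k ≤ G.dist v x + (k-1)} := by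
      apply sim_out1 G τ k v S (k-1)
      exact ⟨⟨v, hvU⟩, by rw [hu1]; exact Set.mem_univ _, rfl⟩
    rcases hv1 with h | h
    · exact hvnot (iter_mono G τ S (by omega) h)
    · simp only [Set.mem_setOf_eq, SimpleGraph.dist_self] at h
      omega
  · rintro ⟨v, S, hbd, hTi, hkact⟩
    have hT0 : IsTargetSet G τ (Subtype.val '' S ∪ {u : V | G.dist v u ≤ k}ᶜ) := by
      obtain ⟨m, hm⟩ := hTi
      refine ⟨m, ?_⟩
      rw [sim_in G τ k v S hbd m, hm, Set.image_univ, Subtype.range_val]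
      exact Set.union_compl_self _
    have hk0 : k ≤ actTime G τ (Subtype.val '' S ∪ {u : V | G.dist v u ≤ k}ᶜ) := by
      by_contra hcon
      push_neg at hcon
      have hu1 := act_univ G τ _ hT0
        (show actTime G τ (Subtype.val '' S ∪ {u : V | G.dist v u ≤ k}ᶜ) ≤ k - 1 by omega)
      have heq := sim_in G τ k v S hbd (k-1)
      rw [hu1] at heq
      have hIu : (interval (G.induce {u : V | G.dist v u ≤ k}) (fun u => τ u.1))^[k-1] S
          = Set.univ := by
        apply Set.eq_univ_of_forall
        intro u
        have hmem : u.1 ∈ Subtype.val ''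
            ((interval (G.induce {u : V | G.dist v u ≤ k}) (fun u => τ u.1))^[k-1] S) ∪
              {u : V | G.dist v u ≤ k}ᶜ := by
          rw [← heq]; exact Set.mem_univ _
        rcases hmem with ⟨u', hu', hval⟩ | h
        · rwa [← Subtype.val_injective hval]
        · exact absurd u.2 h
      have hle : actTime (G.induce {u : V | G.dist v u ≤ k}) (fun u => τ u.1) S ≤ k - 1 := by
        apply Nat.sInf_le
        show (interval (G.induce {u : V | G.dist v u ≤ k}) (fun u => τ u.1))^[k-1+1] S =
          (interval (G.induce {u : V | G.dist v u ≤ k}) (fun u => τ u.1))^[k-1] S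
        rw [Function.iterate_succ_apply', hIu, interval_univ]
      omega
    exact le_trans hk0 (le_csSup (maxTime_bdd G τ) ⟨_, hT0, rfl⟩)
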